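/- (Two-head single-position-error correction.) Let t ≥ 2 and let c, c' ∈ C_1(n,1,t). Let 1 ≤ i ≤ n−t and 1 ≤ i' ≤ n−t, and let w_1, w_2 be binary vectors. Suppose that either w_1 = c(δ_i) and w_2 = c(δ_{i+t}), or w_1 = σ_i(c) and w_2 = σ_{i+t}(c); and suppose likewise that either w_1 = c'(δ_{i'}) and w_2 = c'(δ_{i'+t}), or w_1 = σ_{i'}(c') and w_2 = σ_{i'+t}(c'). Then c = c'. (Thus C_1(n,1,t) is a two-head single-position-error-correcting code — correcting one deletion or one sticky insertion — when the two heads are at distance t.) -/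

import Mathlib

/-- `c` has a contiguous subvector of length `len` with period `ℓ`
(0-indexed starting position `s`). -/
def HasPeriodicSub {n : ℕ} (c : Fin n → ZMod 2) (ℓ len : ℕ) : Prop :=
  ∃ s : ℕ, ∃ _h : s + len ≤ n,
    ∀ j : ℕ, (hj : j + ℓ + 1 ≤ len) →
      c ⟨s + j, by omega⟩ = c ⟨s + j + ℓ, by omega⟩

/-- `L(c,ℓ) ≤ t`: every contiguous subvector of `c` with period `ℓ` has length at most `t`. -/
def LLe {n : ℕ} (c : Fin n → ZMod 2) (ℓ t : ℕ) : Prop :=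
  ∀ len : ℕ, HasPeriodicSub c ℓ len → len ≤ t

/-- The code `C_1(n,1,t) = {c ∈ F_2^n : L(c,1) ≤ t}`. -/
def C1set (n t : ℕ) : Set (Fin n → ZMod 2) := {c | LLe c 1 t}

/-- `c(δ_i)` as a sequence: delete the `i`-th coordinate (1-indexed) of `c`. -/
def deleteAtL {n : ℕ} (c : Fin n → ZMod 2) (i : ℕ) : List (ZMod 2) :=
  ((List.finRange n).filter (fun k => decide (k.val + 1 ≠ i))).map c

/-- `σ_i(c)` as a sequence: sticky insertion at position `i` (1-indexed), i.e.
insert an extra copy of `c_i` immediately after position `i`. -/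
def stickyL {n : ℕ} (c : Fin n → ZMod 2) (i : ℕ) : List (ZMod 2) :=
  (List.finRange n).flatMap (fun k => if k.val + 1 = i then [c k, c k] else [c k])

/- ### Auxiliary machinery -/

lemma c_congr {n : ℕ} (c : Fin n → ZMod 2) {a b : ℕ} {ha : a < n} {hb : b < n}
    (h : a = b) : c ⟨a, ha⟩ = c ⟨b, hb⟩ := by subst h; rfl

/-- The deletion result as a function on `Fin (n-1)`. -/
def delF {n : ℕ} (c : Fin n → ZMod 2) (i : ℕ) : Fin (n - 1) → ZMod 2 :=
  fun j => if j.val + 1 < i then c ⟨j.val, by have := j.isLt; omega⟩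
           else c ⟨j.val + 1, by have := j.isLt; omega⟩

/-- The sticky-insertion result as a function on `Fin (n+1)`. -/
def stkF {n : ℕ} (c : Fin n → ZMod 2) (i : ℕ) (h1 : 1 ≤ i) (h2 : i ≤ n) :
    Fin (n + 1) → ZMod 2 :=
  fun j => if h : j.val < i then c ⟨j.val, by omega⟩
           else c ⟨j.val - 1, by have := j.isLt; omega⟩

lemma delF_eval_lt {n : ℕ} (c : Fin n → ZMod 2) (i : ℕ) {j : ℕ} (hj : j < n - 1)
    (h : j + 1 < i) : delF c i ⟨j, hj⟩ = c ⟨j, by omega⟩ := by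
  simp only [delF]
  rw [if_pos h]

lemma delF_eval_ge {n : ℕ} (c : Fin n → ZMod 2) (i : ℕ) {j : ℕ} (hj : j < n - 1)
    (h : i ≤ j + 1) : delF c i ⟨j, hj⟩ = c ⟨j + 1, by omega⟩ := by
  simp only [delF]
  rw [if_neg (by omega)]

lemma stkF_eval_lt {n : ℕ} (c : Fin n → ZMod 2) {i : ℕ} {h1 : 1 ≤ i} {h2 : i ≤ n}
    {j : ℕ} (hj : j < n + 1) (h : j < i) :
    stkF c i h1 h2 ⟨j, hj⟩ = c ⟨j, by omega⟩ := by
  simp only [stkF]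
  rw [dif_pos h]

lemma stkF_eval_ge {n : ℕ} (c : Fin n → ZMod 2) {i : ℕ} {h1 : 1 ≤ i} {h2 : i ≤ n}
    {j : ℕ} (hj : j < n + 1) (h : i ≤ j) :
    stkF c i h1 h2 ⟨j, hj⟩ = c ⟨j - 1, by omega⟩ := by
  simp only [stkF]
  rw [dif_neg (by omega)]

/- extraction lemmas -/

lemma del_rel_lt {n : ℕ} {c c' : Fin n → ZMod 2} {i i' : ℕ}
    (H : delF c i = delF c' i') {p : ℕ} (hp : p < n - 1)
    (h : p + 1 < i) (h' : p + 1 < i') {hpn : p < n} :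
    c ⟨p, hpn⟩ = c' ⟨p, hpn⟩ := by
  have e := congrFun H ⟨p, hp⟩
  rw [delF_eval_lt c i hp h, delF_eval_lt c' i' hp h'] at e
  exact e

lemma del_rel_mid {n : ℕ} {c c' : Fin n → ZMod 2} {i i' : ℕ}
    (H : delF c i = delF c' i') {p : ℕ} (hp : p < n - 1)
    (h : i ≤ p + 1) (h' : p + 1 < i') {hpn1 : p + 1 < n} {hpn : p < n} :
    c ⟨p + 1, hpn1⟩ = c' ⟨p, hpn⟩ := by
  have e := congrFun H ⟨p, hp⟩
  rw [delF_eval_ge c i hp h, delF_eval_lt c' i' hp h'] at e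
  exact e

lemma del_rel_ge {n : ℕ} {c c' : Fin n → ZMod 2} {i i' : ℕ}
    (H : delF c i = delF c' i') {p : ℕ} (hp : p < n - 1)
    (h : i ≤ p + 1) (h' : i' ≤ p + 1) {hpn1 : p + 1 < n} :
    c ⟨p + 1, hpn1⟩ = c' ⟨p + 1, hpn1⟩ := by
  have e := congrFun H ⟨p, hp⟩
  rw [delF_eval_ge c i hp h, delF_eval_ge c' i' hp h'] at e
  exact e

lemma stk_rel_lt {n : ℕ} {c c' : Fin n → ZMod 2} {i i' : ℕ}
    {pa : 1 ≤ i} {pb : i ≤ n} {pc : 1 ≤ i'} {pd : i' ≤ n}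
    (H : stkF c i pa pb = stkF c' i' pc pd) {p : ℕ} (hp : p < n + 1)
    (h : p < i) (h' : p < i') {hpn : p < n} :
    c ⟨p, hpn⟩ = c' ⟨p, hpn⟩ := by
  have e := congrFun H ⟨p, hp⟩
  rw [stkF_eval_lt c hp h, stkF_eval_lt c' hp h'] at e
  exact e

lemma stk_rel_mid {n : ℕ} {c c' : Fin n → ZMod 2} {i i' : ℕ}
    {pa : 1 ≤ i} {pb : i ≤ n} {pc : 1 ≤ i'} {pd : i' ≤ n}
    (H : stkF c i pa pb = stkF c' i' pc pd) {q : ℕ} (hq : q + 1 < n + 1)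
    (h : i ≤ q + 1) (h' : q + 1 < i') {hqn : q < n} {hq1n : q + 1 < n} :
    c ⟨q, hqn⟩ = c' ⟨q + 1, hq1n⟩ := by
  have e := congrFun H ⟨q + 1, hq⟩
  rw [stkF_eval_ge c hq h, stkF_eval_lt c' hq h'] at e
  exact (c_congr c (show q = q + 1 - 1 by omega)).trans e

lemma stk_rel_ge {n : ℕ} {c c' : Fin n → ZMod 2} {i i' : ℕ}
    {pa : 1 ≤ i} {pb : i ≤ n} {pc : 1 ≤ i'} {pd : i' ≤ n}
    (H : stkF c i pa pb = stkF c' i' pc pd) {q : ℕ} (hq : q + 1 < n + 1)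
    (h : i ≤ q + 1) (h' : i' ≤ q + 1) {hqn : q < n} :
    c ⟨q, hqn⟩ = c' ⟨q, hqn⟩ := by
  have e := congrFun H ⟨q + 1, hq⟩
  rw [stkF_eval_ge c hq h, stkF_eval_ge c' hq h'] at e
  exact ((c_congr c (show q = q + 1 - 1 by omega)).trans e).trans
    (c_congr c' (show q + 1 - 1 = q by omega))

/- list identification lemmas -/

lemma finRange_split {n p : ℕ} (hp : p < n) :
    List.finRange n = (List.finRange n).take p ++
      (⟨p, hp⟩ : Fin n) :: (List.finRange n).drop (p + 1) := by
  have h1 : p < (List.finRange n).length := by simpa using hp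
  conv_lhs => rw [← List.take_append_drop p (List.finRange n)]
  rw [List.drop_eq_getElem_cons h1, List.getElem_finRange]
  rfl

lemma mem_take_lt {n p : ℕ} {a : Fin n} (ha : a ∈ (List.finRange n).take p) : a.val < p := by
  obtain ⟨j, hj, hja⟩ := List.mem_iff_getElem.mp ha
  have hjl : j < p := by simp [List.length_take] at hj; omega
  rw [List.getElem_take, List.getElem_finRange] at hja
  have : a.val = j := by rw [← hja]; rfl
  omega

lemma mem_drop_ge {n p : ℕ} {a : Fin n} (ha : a ∈ (List.finRange n).drop p) : p ≤ a.val := by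
  obtain ⟨j, hj, hja⟩ := List.mem_iff_getElem.mp ha
  rw [List.getElem_drop, List.getElem_finRange] at hja
  have : a.val = p + j := by rw [← hja]; rfl
  omega

lemma del_eq {n : ℕ} (c : Fin n → ZMod 2) (i : ℕ) (h1 : 1 ≤ i) (h2 : i ≤ n) :
    deleteAtL c i = List.ofFn (delF c i) := by
  have hp : i - 1 < n := by omega
  unfold deleteAtL
  rw [finRange_split hp, List.filter_append, List.filter_cons]
  have hcond : (decide ((⟨i - 1, hp⟩ : Fin n).val + 1 ≠ i)) = false := by
    simp; omega
  rw [hcond]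
  simp only [Bool.false_eq_true, if_false]
  rw [List.filter_eq_self.mpr (fun a ha => by
        have := mem_take_lt ha; simp; omega)]
  rw [List.filter_eq_self.mpr (fun a ha => by
        have := mem_drop_ge ha; simp; omega)]
  rw [List.map_append, List.map_take, List.map_drop, ← List.ofFn_eq_map]
  apply List.ext_getElem
  · simp [List.length_take, List.length_drop]; omega
  · intro j hj1 hj2
    have hj : j < n - 1 := by simpa using hj2
    rw [List.getElem_ofFn]
    rcases Nat.lt_or_ge j (i - 1) with hlt | hge
    · rw [List.getElem_append_left (by simp; omega), List.getElem_take,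
        List.getElem_ofFn, delF_eval_lt c i hj (by omega)]
    · rw [List.getElem_append_right (by simp; omega), List.getElem_drop,
        List.getElem_ofFn, delF_eval_ge c i hj (by omega)]
      exact c_congr c (by simp [List.length_take]; omega)

lemma flatMap_no_hit {n i : ℕ} (c : Fin n → ZMod 2) (l : List (Fin n))
    (h : ∀ a ∈ l, a.val + 1 ≠ i) :
    (l.flatMap fun k => if k.val + 1 = i then [c k, c k] else [c k]) = l.map c := by
  induction l with
  | nil => simp
  | cons a l ih =>
    rw [List.flatMap_cons, if_neg (h a (by simp))]
    rw [ih (fun a ha => h a (by simp [ha]))]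
    rfl

lemma stk_eq {n : ℕ} (c : Fin n → ZMod 2) (i : ℕ) (h1 : 1 ≤ i) (h2 : i ≤ n) :
    stickyL c i = List.ofFn (stkF c i h1 h2) := by
  have hp : i - 1 < n := by omega
  unfold stickyL
  rw [finRange_split hp, List.flatMap_append, List.flatMap_cons]
  have hcond : ((⟨i - 1, hp⟩ : Fin n).val + 1 = i) := by simp; omega
  rw [if_pos hcond]
  rw [flatMap_no_hit c _ (fun a ha => by have := mem_take_lt ha; omega)]
  rw [flatMap_no_hit c _ (fun a ha => by have := mem_drop_ge ha; omega)]
  rw [List.map_take, List.map_drop, ← List.ofFn_eq_map]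
  have hmid : ([c ⟨i - 1, hp⟩, c ⟨i - 1, hp⟩] : List (ZMod 2)) ++ (List.ofFn c).drop (i - 1 + 1)
      = c ⟨i - 1, hp⟩ :: (List.ofFn c).drop (i - 1) := by
    rw [List.drop_eq_getElem_cons (l := List.ofFn c) (i := i - 1) (by simp; omega)]
    rw [List.getElem_ofFn]
    rfl
  rw [hmid]
  apply List.ext_getElem
  · simp [List.length_take, List.length_drop]; omega
  · intro j hj1 hj2
    have hj : j < n + 1 := by simpa using hj2
    rw [List.getElem_ofFn]
    rcases Nat.lt_or_ge j (i - 1) with hlt | hge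
    · rw [List.getElem_append_left (by simp; omega), List.getElem_take,
        List.getElem_ofFn, stkF_eval_lt c hj (by omega)]
    · rw [List.getElem_append_right (by simp; omega), List.getElem_cons]
      have hlen : (List.take (i - 1) (List.ofFn c)).length = i - 1 := by
        simp [List.length_take]; omega
      split_ifs with h0
      · rw [stkF_eval_lt c hj (by omega)]
        exact c_congr c (by omega)
      · rw [List.getElem_drop, List.getElem_ofFn, stkF_eval_ge c hj (by omega)]
        exact c_congr c (by omega)

/- main case lemmas -/

lemma del_case {n t : ℕ} (ht : 2 ≤ t) {c c' : Fin n → ZMod 2} (hc : LLe c 1 t)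
    {i i' : ℕ} (hi : 1 ≤ i) (hii : i ≤ i') (hn' : i' + t ≤ n)
    (H1 : delF c i = delF c' i') (H2 : delF c (i + t) = delF c' (i' + t)) :
    c = c' := by
  have hitn : i + t ≤ n := by omega
  have step : ∀ k : ℕ, i ≤ k + 1 → k + 2 ≤ i' → k + 2 ≤ i + t →
      ∀ (hk : k + 1 < n) (hk0 : k < n), c ⟨k, hk0⟩ = c ⟨k + 1, hk⟩ := by
    intro k hk1 hk2 hk3 hk hk0
    have e1 : c ⟨k + 1, hk⟩ = c' ⟨k, hk0⟩ :=
      del_rel_mid H1 (by omega) (by omega) (by omega)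
    have e2 : c ⟨k, hk0⟩ = c' ⟨k, hk0⟩ :=
      del_rel_lt H2 (by omega) (by omega) (by omega)
    exact e2.trans e1.symm
  have hd : i' + 1 ≤ i + t := by
    by_contra hcon
    have hrun : HasPeriodicSub c 1 (t + 1) := by
      refine ⟨i - 1, by omega, fun j hj => ?_⟩
      exact step (i - 1 + j) (by omega) (by omega) (by omega) (by omega) (by omega)
    have := hc (t + 1) hrun
    omega
  funext j
  rcases j with ⟨p, hpn⟩
  rcases Nat.lt_or_ge (p + 1) i with hA | hA
  · exact del_rel_lt H1 (by omega) hA (by omega)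
  · rcases Nat.lt_or_ge (p + 1) i' with hB | hB
    · have e1 : c ⟨p + 1, by omega⟩ = c' ⟨p, hpn⟩ :=
        del_rel_mid H1 (by omega) hA hB
      have e2 : c ⟨p, hpn⟩ = c ⟨p + 1, by omega⟩ :=
        step p hA (by omega) (by omega) (by omega) hpn
      exact e2.trans e1
    · rcases Nat.eq_or_lt_of_le hB with hC | hC
      · exact del_rel_lt H2 (by omega) (by omega) (by omega)
      · calc c ⟨p, hpn⟩ = c ⟨p - 1 + 1, by omega⟩ := c_congr c (by omega)
          _ = c' ⟨p - 1 + 1, by omega⟩ :=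
              del_rel_ge (p := p - 1) H1 (by omega) (by omega) (by omega)
          _ = c' ⟨p, hpn⟩ := c_congr c' (by omega)

lemma stk_case {n t : ℕ} (ht : 2 ≤ t) {c c' : Fin n → ZMod 2} (hc : LLe c 1 t)
    {i i' : ℕ} (hi : 1 ≤ i) (hii : i ≤ i') (hn' : i' + t ≤ n)
    {pa : 1 ≤ i} {pb : i ≤ n} {pc : 1 ≤ i'} {pd : i' ≤ n}
    {pe : 1 ≤ i + t} {pf : i + t ≤ n} {pg : 1 ≤ i' + t} {ph : i' + t ≤ n}
    (H1 : stkF c i pa pb = stkF c' i' pc pd)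
    (H2 : stkF c (i + t) pe pf = stkF c' (i' + t) pg ph) :
    c = c' := by
  have hitn : i + t ≤ n := by omega
  have step : ∀ k : ℕ, i ≤ k + 1 → k + 2 ≤ i' → k + 2 ≤ i + t →
      ∀ (hk : k + 1 < n) (hk0 : k < n), c ⟨k, hk0⟩ = c ⟨k + 1, hk⟩ := by
    intro k hk1 hk2 hk3 hk hk0
    have e1 : c ⟨k, hk0⟩ = c' ⟨k + 1, hk⟩ :=
      stk_rel_mid H1 (by omega) (by omega) (by omega)
    have e2 : c ⟨k + 1, hk⟩ = c' ⟨k + 1, hk⟩ :=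
      stk_rel_lt H2 (by omega) (by omega) (by omega)
    exact e1.trans e2.symm
  have hd : i' + 1 ≤ i + t := by
    by_contra hcon
    have hrun : HasPeriodicSub c 1 (t + 1) := by
      refine ⟨i - 1, by omega, fun j hj => ?_⟩
      exact step (i - 1 + j) (by omega) (by omega) (by omega) (by omega) (by omega)
    have := hc (t + 1) hrun
    omega
  funext j
  rcases j with ⟨p, hpn⟩
  rcases Nat.lt_or_ge p i with hA | hA
  · exact stk_rel_lt H1 (by omega) hA (by omega)
  · rcases Nat.lt_or_ge p i' with hB | hB
    · have e1 : c ⟨p - 1, by omega⟩ = c' ⟨p - 1 + 1, by omega⟩ :=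
        stk_rel_mid (q := p - 1) H1 (by omega) (by omega) (by omega)
      have e2 : c ⟨p - 1, by omega⟩ = c ⟨p - 1 + 1, by omega⟩ :=
        step (p - 1) (by omega) (by omega) (by omega) (by omega) (by omega)
      calc c ⟨p, hpn⟩ = c ⟨p - 1 + 1, by omega⟩ := c_congr c (by omega)
        _ = c ⟨p - 1, by omega⟩ := e2.symm
        _ = c' ⟨p - 1 + 1, by omega⟩ := e1
        _ = c' ⟨p, hpn⟩ := c_congr c' (by omega)
    · exact stk_rel_ge (q := p) H1 (by omega) (by omega) (by omega)

/-- Theorem 11, part 2: `C_1(n,1,t)` is a two-head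
single-position-error-correcting code (one deletion or one sticky insertion)
when the two heads are at distance `t`. -/
theorem stmt17 {n t : ℕ} (ht : 2 ≤ t)
    (c c' : Fin n → ZMod 2) (hc : c ∈ C1set n t) (hc' : c' ∈ C1set n t)
    (i i' : ℕ) (hi : 1 ≤ i) (hin : i ≤ n - t) (hi' : 1 ≤ i') (hin' : i' ≤ n - t)
    (w1 w2 : List (ZMod 2))
    (h : (w1 = deleteAtL c i ∧ w2 = deleteAtL c (i + t)) ∨
         (w1 = stickyL c i ∧ w2 = stickyL c (i + t)))
    (h' : (w1 = deleteAtL c' i' ∧ w2 = deleteAtL c' (i' + t)) ∨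
          (w1 = stickyL c' i' ∧ w2 = stickyL c' (i' + t))) :
    c = c' := by
  have hnt : t + 1 ≤ n := by omega
  have hiN : i + t ≤ n := by omega
  have hiN' : i' + t ≤ n := by omega
  have hLc : LLe c 1 t := hc
  have hLc' : LLe c' 1 t := hc'
  rcases h with ⟨hw1, hw2⟩ | ⟨hw1, hw2⟩ <;>
    rcases h' with ⟨hw1', hw2'⟩ | ⟨hw1', hw2'⟩
  · -- both deletions
    rw [del_eq c i hi (by omega)] at hw1
    rw [del_eq c' i' hi' (by omega)] at hw1'
    rw [del_eq c (i + t) (by omega) (by omega)] at hw2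
    rw [del_eq c' (i' + t) (by omega) (by omega)] at hw2'
    have H1 : delF c i = delF c' i' := List.ofFn_inj.mp (hw1.symm.trans hw1')
    have H2 : delF c (i + t) = delF c' (i' + t) := List.ofFn_inj.mp (hw2.symm.trans hw2')
    rcases Nat.le_total i i' with hii | hii
    · exact del_case ht hLc hi hii (by omega) H1 H2
    · exact (del_case ht hLc' hi' hii (by omega) H1.symm H2.symm).symm
  · -- deletion vs insertion: impossible by length
    exfalso
    rw [del_eq c i hi (by omega)] at hw1
    rw [stk_eq c' i' hi' (by omega)] at hw1'
    have := congrArg List.length (hw1.symm.trans hw1')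
    simp [List.length_ofFn] at this
  · -- insertion vs deletion: impossible by length
    exfalso
    rw [stk_eq c i hi (by omega)] at hw1
    rw [del_eq c' i' hi' (by omega)] at hw1'
    have := congrArg List.length (hw1.symm.trans hw1')
    simp [List.length_ofFn] at this
    omega
  · -- both insertions
    rw [stk_eq c i hi (by omega)] at hw1
    rw [stk_eq c' i' hi' (by omega)] at hw1'
    rw [stk_eq c (i + t) (by omega) (by omega)] at hw2
    rw [stk_eq c' (i' + t) (by omega) (by omega)] at hw2'
    have H1 := List.ofFn_inj.mp (hw1.symm.trans hw1')
    have H2 := List.ofFn_inj.mp (hw2.symm.trans hw2')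
    rcases Nat.le_total i i' with hii | hii
    · exact stk_case ht hLc hi hii (by omega) H1 H2
    · exact (stk_case ht hLc' hi' hii (by omega) H1.symm H2.symm).symm
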